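/- Let p be an odd prime. Then, as an exact identity, W_p = ∑_{a=1}^{p−1} (−1)^a · binomial(p−1, a) · q_p(a). -/

import Mathlib

open Finset

/-- `x ≡ y (mod p^k)` for rationals: `x - y = p^k * (c/d)` with `p ∤ d`. -/
def ratCongr (p k : ℕ) (x y : ℚ) : Prop :=
  ∃ c d : ℤ, ¬ (p : ℤ) ∣ d ∧ x - y = (p : ℚ) ^ k * ((c : ℚ) / (d : ℚ))

/-- The Wilson quotient `W_p = ((p-1)! + 1)/p` (an integer by Wilson's theorem). -/
def wilsonQuotient (p : ℕ) : ℤ := ((Nat.factorial (p - 1) : ℤ) + 1) / p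

/-- The Fermat quotient `q_p(a) = (a^(p-1) - 1)/p` (an integer for `p ∤ a`). -/
def fermatQuotient (p a : ℕ) : ℤ := ((a : ℤ) ^ (p - 1) - 1) / p

/-- A prime `p` is a Wilson prime if `p ∣ W_p`. -/
def IsWilsonPrime (p : ℕ) : Prop := (p : ℤ) ∣ wilsonQuotient p

/-- A prime `p` is a Lerch prime if `∑_{a=1}^{p-1} q_p(a) ≡ W_p (mod p²)`. -/
def IsLerchPrime (p : ℕ) : Prop :=
  (p : ℤ) ^ 2 ∣ (∑ a ∈ Icc 1 (p - 1), fermatQuotient p a) - wilsonQuotient p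

/-- The harmonic number `H_a = ∑_{k=1}^{a} 1/k`. -/
def harmonicNum (a : ℕ) : ℚ := ∑ k ∈ Icc 1 a, (1 : ℚ) / k

/-- The generalized harmonic number `H_{a,2} = ∑_{k=1}^{a} 1/k²`. -/
def harmonicNum2 (a : ℕ) : ℚ := ∑ k ∈ Icc 1 a, (1 : ℚ) / (k : ℚ) ^ 2

lemma finDiff (n : ℕ) : ∀ m : ℕ, m ≤ n →
    ∑ k ∈ range (n+1), (-1:ℤ)^k * (n.choose k : ℤ) * (k:ℤ)^m
      = if m < n then 0 else (-1:ℤ)^n * (n.factorial : ℤ) := by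
  induction n with
  | zero => intro m hm; interval_cases m; simp
  | succ n ih =>
    intro m hm
    match m with
    | 0 =>
      simp only [pow_zero, mul_one]
      rw [if_pos (Nat.succ_pos n)]
      exact Int.alternating_sum_range_choose_of_ne (Nat.succ_ne_zero n)
    | m'+1 =>
      have hm' : m' ≤ n := Nat.succ_le_succ_iff.mp hm
      rw [Finset.sum_range_succ']
      have h0 : (-1:ℤ)^0 * ((n+1).choose 0 : ℤ) * ((0:ℕ):ℤ)^(m'+1) = 0 := by simp
      rw [h0, add_zero]
      have hterm : ∀ i : ℕ,
          (-1:ℤ)^(i+1) * ((n+1).choose (i+1):ℤ) * ((i+1:ℕ):ℤ)^(m'+1)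
          = (-((n:ℤ)+1)) * ∑ j ∈ range (m'+1),
              (m'.choose j : ℤ) * ((-1:ℤ)^i * (n.choose i : ℤ) * (i:ℤ)^j) := by
        intro i
        have h1 : ((n+1).choose (i+1) : ℤ) * ((i:ℤ)+1) = ((n:ℤ)+1) * (n.choose i : ℤ) := by
          exact_mod_cast congrArg (Nat.cast (R := ℤ)) (Nat.add_one_mul_choose_eq n i).symm
        have h3 : ((i:ℤ)+1)^m' = ∑ j ∈ range (m'+1), (i:ℤ)^j * (m'.choose j : ℤ) := by
          rw [add_pow]; simp
        have hc : ((i+1:ℕ):ℤ) = (i:ℤ)+1 := by push_cast; ring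
        rw [hc]
        calc (-1:ℤ)^(i+1) * ((n+1).choose (i+1):ℤ) * ((i:ℤ)+1)^(m'+1)
            = ∑ j ∈ range (m'+1),
                (-1:ℤ)^(i+1) * ((n+1).choose (i+1):ℤ) * ((i:ℤ)^j * (m'.choose j : ℤ) * ((i:ℤ)+1)) := by
              rw [pow_succ ((i:ℤ)+1) m', h3, Finset.sum_mul, Finset.mul_sum]
          _ = ∑ j ∈ range (m'+1),
              (-((n:ℤ)+1)) * ((m'.choose j : ℤ) * ((-1:ℤ)^i * (n.choose i : ℤ) * (i:ℤ)^j)) := by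
              refine Finset.sum_congr rfl fun j _ => ?_
              have hs : (-1:ℤ)^(i+1) = -(-1:ℤ)^i := by rw [pow_succ]; ring
              rw [hs]
              linear_combination (-(-1:ℤ)^i * (i:ℤ)^j * (m'.choose j : ℤ)) * h1
          _ = _ := by rw [Finset.mul_sum]
      calc ∑ i ∈ range (n+1), (-1:ℤ)^(i+1) * ((n+1).choose (i+1):ℤ) * ((i+1:ℕ):ℤ)^(m'+1)
          = ∑ i ∈ range (n+1), (-((n:ℤ)+1)) * ∑ j ∈ range (m'+1),
              (m'.choose j : ℤ) * ((-1:ℤ)^i * (n.choose i : ℤ) * (i:ℤ)^j) := by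
            exact Finset.sum_congr rfl fun i _ => hterm i
        _ = (-((n:ℤ)+1)) * ∑ j ∈ range (m'+1), (m'.choose j : ℤ) *
              ∑ i ∈ range (n+1), (-1:ℤ)^i * (n.choose i : ℤ) * (i:ℤ)^j := by
            rw [← Finset.mul_sum, Finset.sum_comm]
            congr 1
            refine Finset.sum_congr rfl fun j _ => ?_
            rw [Finset.mul_sum]
        _ = if m'+1 < n+1 then 0 else (-1:ℤ)^(n+1) * ((n+1).factorial : ℤ) := by
            rcases lt_or_eq_of_le hm' with h | h
            · rw [if_pos (Nat.succ_lt_succ h)]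
              have : ∀ j ∈ range (m'+1), (m'.choose j : ℤ) *
                  (∑ i ∈ range (n+1), (-1:ℤ)^i * (n.choose i : ℤ) * (i:ℤ)^j) = 0 := by
                intro j hj
                have hjn : j < n := lt_of_le_of_lt (Nat.lt_succ_iff.mp (mem_range.mp hj)) h
                rw [ih j (le_of_lt hjn), if_pos hjn, mul_zero]
              rw [Finset.sum_eq_zero this, mul_zero]
            · rw [h, if_neg (lt_irrefl _)]
              rw [Finset.sum_eq_single_of_mem n (self_mem_range_succ n)]
              · rw [ih n le_rfl, if_neg (lt_irrefl n)]
                simp only [Nat.choose_self, Nat.cast_one, one_mul, Nat.factorial_succ]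
                push_cast
                ring
              · intro j hj hjn
                rw [ih j (Nat.lt_succ_iff.mp (mem_range.mp hj)),
                  if_pos (lt_of_le_of_ne (Nat.lt_succ_iff.mp (mem_range.mp hj)) hjn), mul_zero]


theorem stmt_10 (p : ℕ) (hp : p.Prime) (hodd : Odd p) :
    wilsonQuotient p =
      ∑ a ∈ Icc 1 (p - 1), (-1) ^ a * ((p - 1).choose a : ℤ) * fermatQuotient p a := by
  haveI : Fact p.Prime := ⟨hp⟩
  set n := p - 1 with hn
  have hp2 : 2 ≤ p := hp.two_le
  have hn1 : n + 1 = p := Nat.succ_pred_eq_of_pos hp.pos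
  have hn0 : n ≠ 0 := by omega
  have heven : Even n := by
    rcases hodd with ⟨t, ht⟩; exact ⟨t, by omega⟩
  have hp0 : (p : ℤ) ≠ 0 := by exact_mod_cast hp.ne_zero
  -- divisibilities
  have hdvd : ∀ a ∈ Icc 1 n, (p : ℤ) ∣ (a : ℤ) ^ n - 1 := by
    intro a ha
    rw [mem_Icc] at ha
    have hane : (a : ZMod p) ≠ 0 := by
      rw [Ne, ZMod.natCast_eq_zero_iff]
      intro hdvd
      have := Nat.le_of_dvd (by omega) hdvd
      omega
    have hpow : ((a : ZMod p)) ^ (p - 1) = 1 := ZMod.pow_card_sub_one_eq_one hane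
    have : (((a : ℤ) ^ n - 1 : ℤ) : ZMod p) = 0 := by
      push_cast
      rw [hpow]; ring
    exact (ZMod.intCast_zmod_eq_zero_iff_dvd _ _).mp this
  have hW : (p : ℤ) ∣ (Nat.factorial n : ℤ) + 1 := by
    have : (((Nat.factorial n : ℤ) + 1 : ℤ) : ZMod p) = 0 := by
      push_cast
      rw [ZMod.wilsons_lemma]; ring
    exact (ZMod.intCast_zmod_eq_zero_iff_dvd _ _).mp this
  -- the alternating sum identity
  have hA : ∑ k ∈ range (n+1), (-1:ℤ)^k * (n.choose k : ℤ) * (k:ℤ)^n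
      = (Nat.factorial n : ℤ) := by
    rw [finDiff n n le_rfl, if_neg (lt_irrefl n), heven.neg_one_pow, one_mul]
  have hB : ∑ k ∈ range (n+1), (-1:ℤ)^k * (n.choose k : ℤ) = 0 :=
    Int.alternating_sum_range_choose_of_ne hn0
  have hsplit : ∀ f : ℕ → ℤ, ∑ k ∈ range (n+1), f k = f 0 + ∑ k ∈ Icc 1 n, f k := by
    intro f
    rw [show range (n+1) = insert 0 (Icc 1 n) by
      ext x; simp [Nat.lt_succ_iff, Nat.one_le_iff_ne_zero]; omega]
    rw [Finset.sum_insert (by simp)]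
  have hS : ∑ a ∈ Icc 1 n, (-1:ℤ)^a * (n.choose a : ℤ) * ((a:ℤ)^n - 1)
      = (Nat.factorial n : ℤ) + 1 := by
    have e1 := hsplit (fun k => (-1:ℤ)^k * (n.choose k : ℤ) * (k:ℤ)^n)
    have e2 := hsplit (fun k => (-1:ℤ)^k * (n.choose k : ℤ))
    rw [hA] at e1
    rw [hB] at e2
    simp only [pow_zero, one_mul, Nat.choose_zero_right, Nat.cast_one, Nat.cast_zero,
      mul_one, zero_pow hn0, mul_zero, zero_add] at e1 e2
    have : ∑ a ∈ Icc 1 n, (-1:ℤ)^a * (n.choose a : ℤ) * ((a:ℤ)^n - 1)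
        = (∑ a ∈ Icc 1 n, (-1:ℤ)^a * (n.choose a : ℤ) * (a:ℤ)^n)
          - ∑ a ∈ Icc 1 n, (-1:ℤ)^a * (n.choose a : ℤ) := by
      rw [← Finset.sum_sub_distrib]
      exact Finset.sum_congr rfl fun a _ => by ring
    rw [this, ← e1]
    omega
  -- multiply through by p
  apply mul_left_cancel₀ hp0
  rw [Finset.mul_sum]
  have hlhs : (p:ℤ) * wilsonQuotient p = (Nat.factorial n : ℤ) + 1 :=
    Int.mul_ediv_cancel' hW
  rw [hlhs, ← hS]
  refine Finset.sum_congr rfl fun a ha => Eq.symm ?_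
  have hq : (p:ℤ) * fermatQuotient p a = (a:ℤ)^n - 1 := Int.mul_ediv_cancel' (hdvd a ha)
  calc (p:ℤ) * ((-1)^a * ((n.choose a : ℕ) : ℤ) * fermatQuotient p a)
      = (-1)^a * ((n.choose a : ℕ) : ℤ) * ((p:ℤ) * fermatQuotient p a) := by ring
    _ = (-1:ℤ)^a * (n.choose a : ℤ) * ((a:ℤ)^n - 1) := by rw [hq]
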